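/- arXiv:1512.05654 — 3 statements merged into one kernel-verified Lean document; each statement's English description precedes it below -/
import Mathlib

section
/- Let M be a von Neumann algebra on a complex Hilbert space H and let P : M → M be a normal linear contraction. Suppose Q : M → M is a bounded normal linear map with Q ∘ Q = Q, range Q = Fix P, and Q ∘ P = P ∘ Q. Then for every free ultrafilter β on ℕ and every x ∈ M, the Cesàro means Aₙ(x) converge to Q(x) in the weak operator topology along β; that is, the ultrafilter Cesàro projection P̃_β coincides with Q for every free ultrafilter β. -/
open Filter Topology
open scoped InnerProductSpace ComplexConjugate

noncomputable section

variable {H : Type*} [NormedAddCommGroup H] [InnerProductSpace ℂ H] [CompleteSpace H]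

/-- Convergence in the weak operator topology of a family of operators along a filter. -/
def WOTTendsto {ι : Type*} (T : ι → (H →L[ℂ] H)) (l : Filter ι) (x : H →L[ℂ] H) : Prop :=
  Tendsto (fun i => ContinuousLinearMapWOT.ofCLM (T i)) l
    (𝓝 (ContinuousLinearMapWOT.ofCLM x))

/-- A map `P` is normal on a set `S` of operators if whenever a norm-bounded net in `S`
WOT-converges to an element of `S`, the image net WOT-converges to the image of the limit. -/
def IsNormalOn (S : Set (H →L[ℂ] H)) (P : (H →L[ℂ] H) → (H →L[ℂ] H)) : Prop :=
  ∀ {ι : Type*} (l : Filter ι) (T : ι → (H →L[ℂ] H)) (C : ℝ) (x : H →L[ℂ] H),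
    (∀ i, T i ∈ S) → (∀ i, ‖T i‖ ≤ C) → x ∈ S → WOTTendsto T l x →
      WOTTendsto (fun i => P (T i)) l (P x)

lemma wotTendsto_iff {ι : Type*} {T : ι → (H →L[ℂ] H)} {l : Filter ι} {x : H →L[ℂ] H} :
    WOTTendsto T l x ↔ ∀ ξ η, Tendsto (fun i => ⟪η, T i ξ⟫_ℂ) l (𝓝 ⟪η, x ξ⟫_ℂ) := by
  unfold WOTTendsto
  rw [ContinuousLinearMapWOT.tendsto_iff_forall_inner_apply_tendsto]
  rfl




universe u in
lemma wotTendsto_ulift {T : ℕ → (H →L[ℂ] H)} {l : Filter ℕ} {x : H →L[ℂ] H} :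
    WOTTendsto (fun i : ULift.{u} ℕ => T i.down) (Filter.map ULift.up l) x ↔ WOTTendsto T l x := by
  unfold WOTTendsto
  rw [Filter.tendsto_map'_iff]
  rfl

lemma exists_clim {ι : Type*} (β : Ultrafilter ι) (g : ι → ℂ) (C : ℝ) (h : ∀ n, ‖g n‖ ≤ C) :
    ∃ a, Tendsto g ↑β (𝓝 a) := by
  have hc : IsCompact (Metric.closedBall (0:ℂ) C) := isCompact_closedBall _ _
  obtain ⟨a, -, ha⟩ := hc.ultrafilter_le_nhds (β.map g)
    (by
      rw [le_principal_iff, Ultrafilter.mem_coe, Ultrafilter.mem_map]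
      exact β.sets_of_superset univ_mem (fun n _ => by
        simpa [Metric.mem_closedBall, dist_eq_norm] using h n))
  exact ⟨a, ha⟩

lemma exists_wotLimit (β : Ultrafilter ℕ) (T : ℕ → (H →L[ℂ] H)) (C : ℝ)
    (hC : ∀ n, ‖T n‖ ≤ C) : ∃ z : H →L[ℂ] H, WOTTendsto T ↑β z := by
  have hC0 : 0 ≤ C := le_trans (norm_nonneg _) (hC 0)
  have bnd : ∀ (ξ η : H) n, ‖⟪T n ξ, η⟫_ℂ‖ ≤ C * ‖ξ‖ * ‖η‖ := by
    intro ξ η n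
    calc ‖⟪T n ξ, η⟫_ℂ‖ ≤ ‖T n ξ‖ * ‖η‖ := norm_inner_le_norm _ _
      _ ≤ C * ‖ξ‖ * ‖η‖ := by
          gcongr
          exact le_trans (ContinuousLinearMap.le_opNorm _ _)
            (mul_le_mul_of_nonneg_right (hC n) (norm_nonneg _))
  have key : ∀ ξ η : H, ∃ a, Tendsto (fun n => ⟪T n ξ, η⟫_ℂ) ↑β (𝓝 a) :=
    fun ξ η => exists_clim β _ (C * ‖ξ‖ * ‖η‖) (bnd ξ η)
  choose a ha using key
  have huniq : ∀ {ξ η : H} {b : ℂ}, Tendsto (fun n => ⟪T n ξ, η⟫_ℂ) ↑β (𝓝 b) → a ξ η = b :=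
    fun h => tendsto_nhds_unique (ha _ _) h
  -- sesquilinear form : conj-linear in first slot, linear in second
  let B₀ : H →ₗ⋆[ℂ] H →ₗ[ℂ] ℂ := LinearMap.mk₂'ₛₗ (starRingEnd ℂ) (RingHom.id ℂ) a
    (fun ξ ξ' η => huniq (by simpa [map_add, inner_add_left] using ((ha ξ η).add (ha ξ' η))))
    (fun c ξ η => huniq (by simpa [map_smul, inner_smul_left, mul_comm] using ((ha ξ η).const_mul (conj c))))
    (fun ξ η η' => huniq (by simpa [inner_add_right] using ((ha ξ η).add (ha ξ η'))))
    (fun c ξ η => huniq (by simpa [inner_smul_right, smul_eq_mul] using ((ha ξ η).const_mul c)))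
  have hB₀bound : ∀ ξ η, ‖B₀ ξ η‖ ≤ C * ‖ξ‖ * ‖η‖ := by
    intro ξ η
    exact le_of_tendsto (ha ξ η).norm (Eventually.of_forall (bnd ξ η))
  let B : H →L⋆[ℂ] H →L[ℂ] ℂ := LinearMap.mkContinuous₂ B₀ C hB₀bound
  refine ⟨InnerProductSpace.continuousLinearMapOfBilin B, ?_⟩
  rw [wotTendsto_iff]
  intro ξ η
  have h1 : ⟪η, (InnerProductSpace.continuousLinearMapOfBilin B) ξ⟫_ℂ = conj (a ξ η) := by
    rw [← inner_conj_symm]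
    congr 1
    exact InnerProductSpace.continuousLinearMapOfBilin_apply B ξ η
  rw [h1]
  have h2 := (continuous_star.tendsto (a ξ η)).comp (ha ξ η)
  have h3 : ∀ n, star ⟪T n ξ, η⟫_ℂ = ⟪η, T n ξ⟫_ℂ := fun n => inner_conj_symm _ _
  refine h2.congr fun n => ?_
  simpa using h3 n

lemma wotTendsto_unique {ι : Type*} {l : Filter ι} [l.NeBot] {T : ι → (H →L[ℂ] H)}
    {z z' : H →L[ℂ] H} (h : WOTTendsto T l z) (h' : WOTTendsto T l z') : z = z' := by
  rw [wotTendsto_iff] at h h'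
  refine ContinuousLinearMap.ext fun ξ => ext_inner_left ℂ fun η => ?_
  exact tendsto_nhds_unique (h ξ η) (h' ξ η)

lemma mem_of_wotTendsto (M : VonNeumannAlgebra H) {ι : Type*} {l : Filter ι} [l.NeBot]
    {T : ι → (H →L[ℂ] H)} {z : H →L[ℂ] H} (hT : ∀ n, T n ∈ M) (h : WOTTendsto T l z) :
    z ∈ M := by
  rw [wotTendsto_iff] at h
  have : z ∈ Set.centralizer (Set.centralizer (M : Set (H →L[ℂ] H))) := by
    rw [Set.mem_centralizer_iff]
    intro g hg
    refine ContinuousLinearMap.ext fun ξ => ext_inner_left ℂ fun η => ?_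
    have e1 : ∀ n, ⟪η, g (T n ξ)⟫_ℂ = ⟪η, T n (g ξ)⟫_ℂ := by
      intro n
      have := hg _ (hT n)
      have := congrArg (fun (S : H →L[ℂ] H) => S ξ) this
      simp only [ContinuousLinearMap.mul_apply] at this
      rw [this]
    have t1 : Tendsto (fun n => ⟪η, g (T n ξ)⟫_ℂ) l (𝓝 ⟪η, g (z ξ)⟫_ℂ) := by
      simp only [← ContinuousLinearMap.adjoint_inner_left g]
      exact h ξ (ContinuousLinearMap.adjoint g η)
    have t2 : Tendsto (fun n => ⟪η, T n (g ξ)⟫_ℂ) l (𝓝 ⟪η, z (g ξ)⟫_ℂ) := h (g ξ) η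
    have := tendsto_nhds_unique (t1.congr e1) t2
    simpa [ContinuousLinearMap.mul_apply] using this
  rw [M.centralizer_centralizer] at this
  exact this

/-- If a normal contraction `P` on a von Neumann algebra admits a bounded normal projection `Q`
onto its fixed point space commuting with `P`, then the ultrafilter Cesàro projection coincides
with `Q` for every free ultrafilter. -/
theorem cesaro_projection_eq_of_normal_projection
    (M : VonNeumannAlgebra H)
    (P : (H →L[ℂ] H) → (H →L[ℂ] H))
    (hPmem : ∀ x ∈ M, P x ∈ M)
    (hPadd : ∀ x ∈ M, ∀ y ∈ M, P (x + y) = P x + P y)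
    (hPsmul : ∀ (c : ℂ), ∀ x ∈ M, P (c • x) = c • P x)
    (hPcontr : ∀ x ∈ M, ‖P x‖ ≤ ‖x‖)
    (hPnormal : IsNormalOn (M : Set (H →L[ℂ] H)) P)
    (Fix : Set (H →L[ℂ] H)) (hFix : Fix = {x | x ∈ M ∧ P x = x})
    (A : ℕ → (H →L[ℂ] H) → (H →L[ℂ] H))
    (hA : ∀ n x, A n x = (n : ℂ)⁻¹ • ∑ k ∈ Finset.range n, P^[k] x)
    (Q : (H →L[ℂ] H) → (H →L[ℂ] H))
    (hQmem : ∀ x ∈ M, Q x ∈ M)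
    (hQadd : ∀ x ∈ M, ∀ y ∈ M, Q (x + y) = Q x + Q y)
    (hQsmul : ∀ (c : ℂ), ∀ x ∈ M, Q (c • x) = c • Q x)
    (hQbdd : ∃ C : ℝ, ∀ x ∈ M, ‖Q x‖ ≤ C * ‖x‖)
    (hQnormal : IsNormalOn (M : Set (H →L[ℂ] H)) Q)
    (hQidem : ∀ x ∈ M, Q (Q x) = Q x)
    (hQrange : {y | ∃ x ∈ M, Q x = y} = Fix)
    (hQP : ∀ x ∈ M, Q (P x) = P (Q x)) :
    ∀ (β : Ultrafilter ℕ), (β : Filter ℕ) ≤ Filter.cofinite →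
      ∀ x ∈ M, WOTTendsto (fun n => A n x) (β : Filter ℕ) (Q x) := by
  intro β hβ x hx
  have hβat : (β : Filter ℕ) ≤ atTop := by rwa [← Nat.cofinite_eq_atTop]
  have hiter : ∀ k, P^[k] x ∈ M ∧ ‖P^[k] x‖ ≤ ‖x‖ := by
    intro k; induction k with
    | zero => exact ⟨by simpa using hx, by simp⟩
    | succ k ih =>
      rw [Function.iterate_succ_apply']
      exact ⟨hPmem _ ih.1, le_trans (hPcontr _ ih.1) ih.2⟩
  have hsum : ∀ n, (∑ k ∈ Finset.range n, P^[k] x) ∈ M :=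
    fun n => sum_mem (fun k _ => (hiter k).1)
  have hAmem : ∀ n, A n x ∈ M := by
    intro n; rw [hA]
    exact M.toStarSubalgebra.smul_mem (hsum n) _
  have hAnorm : ∀ n, ‖A n x‖ ≤ ‖x‖ := by
    intro n; rw [hA, norm_smul]
    rcases Nat.eq_zero_or_pos n with h0 | hpos
    · subst h0; simp
    · have hs : ‖∑ k ∈ Finset.range n, P^[k] x‖ ≤ (n : ℝ) * ‖x‖ := by
        refine le_trans (norm_sum_le _ _) ?_
        calc ∑ k ∈ Finset.range n, ‖P^[k] x‖
            ≤ ∑ _k ∈ Finset.range n, ‖x‖ := Finset.sum_le_sum fun k _ => (hiter k).2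
          _ = (n : ℝ) * ‖x‖ := by simp [mul_comm]
      have hn : ‖((n : ℂ))⁻¹‖ = (n : ℝ)⁻¹ := by simp
      rw [hn]
      calc (n : ℝ)⁻¹ * ‖∑ k ∈ Finset.range n, P^[k] x‖
          ≤ (n : ℝ)⁻¹ * ((n : ℝ) * ‖x‖) := by gcongr
        _ = ‖x‖ := by field_simp
  obtain ⟨z, hz⟩ := exists_wotLimit β (fun n => A n x) ‖x‖ hAnorm
  have hzM : z ∈ M := mem_of_wotTendsto M hAmem hz
  have hP0 : P 0 = 0 := by simpa using hPsmul 0 x hx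
  have hPsum : ∀ n, P (∑ k ∈ Finset.range n, P^[k] x) = ∑ k ∈ Finset.range n, P^[k+1] x := by
    intro n; induction n with
    | zero => simpa using hP0
    | succ n ih =>
      rw [Finset.sum_range_succ, hPadd _ (hsum n) _ (hiter n).1, ih, Finset.sum_range_succ,
        ← Function.iterate_succ_apply' P n x]
  have hPA : ∀ n, P (A n x) = A n x + (n : ℂ)⁻¹ • (P^[n] x - x) := by
    intro n
    have key : (∑ k ∈ Finset.range n, P^[k+1] x) + x
        = (∑ k ∈ Finset.range n, P^[k] x) + P^[n] x := by
      have h1 := Finset.sum_range_succ' (fun k => P^[k] x) n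
      have h2 := Finset.sum_range_succ (fun k => P^[k] x) n
      simp only [Function.iterate_zero, id_eq] at h1
      rw [← h1, h2]
    have e : ∑ k ∈ Finset.range n, P^[k+1] x
        = (∑ k ∈ Finset.range n, P^[k] x) + (P^[n] x - x) := by
      rw [eq_sub_of_add_eq key, add_sub_assoc]
    rw [hA, hPsmul _ _ (hsum n), hPsum, e, smul_add, ← hA]
  have hPAz : WOTTendsto (fun n => P (A n x)) ↑β z := by
    rw [wotTendsto_iff]
    intro ξ η
    have hzt := (wotTendsto_iff.mp hz) ξ η
    have hrem : Tendsto (fun n : ℕ => ⟪η, ((n:ℂ)⁻¹ • (P^[n] x - x)) ξ⟫_ℂ) ↑β (𝓝 0) := by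
      have hbt : Tendsto (fun n : ℕ => (n : ℝ)⁻¹ * (2 * ‖x‖ * ‖ξ‖ * ‖η‖)) atTop (𝓝 0) := by
        simpa using (tendsto_natCast_atTop_atTop (R := ℝ)).inv_tendsto_atTop.mul_const
          (2 * ‖x‖ * ‖ξ‖ * ‖η‖)
      refine squeeze_zero_norm (fun n => ?_) (hbt.mono_left hβat)
      calc ‖⟪η, ((n:ℂ)⁻¹ • (P^[n] x - x)) ξ⟫_ℂ‖
          ≤ ‖η‖ * ‖((n:ℂ)⁻¹ • (P^[n] x - x)) ξ‖ := norm_inner_le_norm _ _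
        _ ≤ ‖η‖ * (‖(n:ℂ)⁻¹ • (P^[n] x - x)‖ * ‖ξ‖) := by
            gcongr; exact ContinuousLinearMap.le_opNorm _ _
        _ ≤ ‖η‖ * (((n:ℝ)⁻¹ * (2 * ‖x‖)) * ‖ξ‖) := by
            gcongr
            rw [norm_smul]
            have : ‖((n : ℂ))⁻¹‖ = (n : ℝ)⁻¹ := by simp
            rw [this]
            gcongr
            calc ‖P^[n] x - x‖ ≤ ‖P^[n] x‖ + ‖x‖ := norm_sub_le _ _
              _ ≤ ‖x‖ + ‖x‖ := by gcongr; exact (hiter n).2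
              _ = 2 * ‖x‖ := by ring
        _ = (n : ℝ)⁻¹ * (2 * ‖x‖ * ‖ξ‖ * ‖η‖) := by ring
    have hadd : Tendsto (fun n => ⟪η, (A n x) ξ⟫_ℂ + ⟪η, ((n:ℂ)⁻¹ • (P^[n] x - x)) ξ⟫_ℂ)
        ↑β (𝓝 (⟪η, z ξ⟫_ℂ + 0)) := hzt.add hrem
    rw [add_zero] at hadd
    refine hadd.congr fun n => ?_
    rw [hPA n]
    simp [inner_add_right]
  have hPAnz : WOTTendsto (fun n => P (A n x)) ↑β (P z) := by
    have h := hPnormal (Filter.map ULift.up ↑β) (fun i => A i.down x) ‖x‖ z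
      (fun i => hAmem i.down) (fun i => hAnorm i.down) hzM (wotTendsto_ulift.mpr hz)
    exact wotTendsto_ulift.mp h
  have hPz : P z = z := wotTendsto_unique hPAnz hPAz
  have hQFix : ∀ y ∈ M, P (Q y) = Q y := by
    intro y hy
    have : Q y ∈ Fix := by rw [← hQrange]; exact ⟨y, hy, rfl⟩
    rw [hFix] at this; exact this.2
  have hQzz : Q z = z := by
    have hzFix : z ∈ Fix := by rw [hFix]; exact ⟨hzM, hPz⟩
    rw [← hQrange] at hzFix
    obtain ⟨w, hw, hQw⟩ := hzFix
    rw [← hQw, hQidem _ hw]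
  have hQPk : ∀ k, Q (P^[k] x) = Q x := by
    intro k; induction k with
    | zero => simp
    | succ k ih =>
      rw [Function.iterate_succ_apply', hQP _ (hiter k).1, ih, hQFix _ hx]
  have hQ0 : Q 0 = 0 := by simpa using hQsmul 0 x hx
  have hQsum : ∀ n, Q (∑ k ∈ Finset.range n, P^[k] x) = n • Q x := by
    intro n; induction n with
    | zero => simpa using hQ0
    | succ n ih =>
      rw [Finset.sum_range_succ, hQadd _ (hsum n) _ (hiter n).1, ih, hQPk, succ_nsmul]
  have hQA : ∀ n : ℕ, 1 ≤ n → Q (A n x) = Q x := by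
    intro n hn
    rw [hA, hQsmul _ _ (hsum n), hQsum, ← Nat.cast_smul_eq_nsmul ℂ, smul_smul,
      inv_mul_cancel₀ (Nat.cast_ne_zero.mpr (by omega)), one_smul]
  have hQAz : WOTTendsto (fun n => Q (A n x)) ↑β (Q z) := by
    have h := hQnormal (Filter.map ULift.up ↑β) (fun i => A i.down x) ‖x‖ z
      (fun i => hAmem i.down) (fun i => hAnorm i.down) hzM (wotTendsto_ulift.mpr hz)
    exact wotTendsto_ulift.mp h
  have hQAx : WOTTendsto (fun n => Q (A n x)) ↑β (Q x) := by
    have hev : ∀ᶠ n in (β : Filter ℕ), 1 ≤ n := hβat (eventually_ge_atTop 1)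
    unfold WOTTendsto
    refine Tendsto.congr' ?_ (tendsto_const_nhds (x := ContinuousLinearMapWOT.ofCLM (Q x)))
    exact hev.mono fun n hn => congrArg _ (hQA n hn).symm
  have hzQx : z = Q x := by
    rw [← hQzz]
    exact wotTendsto_unique hQAz hQAx
  exact hzQx ▸ hz

end
end

section
/- Let G be a locally compact Hausdorff topological group with a left Haar measure, let H and K be separable complex Hilbert spaces, let X ⊆ B(H;K) be a norm-closed linear subspace closed under the ternary product (a,b,c) ↦ a b* c, and let α : G → (X → X) be a group homomorphism such that each α_g is a surjective linear isometry satisfying α_g(a b* c) = α_g(a)·α_g(b)*·α_g(c), and for each x ∈ X the map g ↦ α_g(x) is WOT-continuous. Then for every x ∈ X there exists a unique bounded linear operator π(x) : L²(G;H) → L²(G;K) such that for every ζ ∈ L²(G;H), (π(x)ζ)(g) = α_{g⁻¹}(x)(ζ(g)) for almost every g ∈ G. Moreover x ↦ π(x) is linear, ‖π(x)‖ = ‖x‖ for every x ∈ X, and π(x y* z) = π(x)·π(y)*·π(z) for all x, y, z ∈ X; that is, π is an isometric (faithful) TRO representation of X on the pair (L²(G;H), L²(G;K)). -/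
open Filter Topology MeasureTheory ContinuousLinearMap

noncomputable section
open scoped InnerProductSpace ENNReal
set_option maxHeartbeats 1000000

noncomputable section

lemma aux_norm_le_inner {K : Type*} [NormedAddCommGroup K] [InnerProductSpace ℂ K]
    (w v : K) : ‖w‖⁻¹ * ‖⟪w, v⟫_ℂ‖ ≤ ‖v‖ := by
  rcases eq_or_ne w (0 : K) with rfl | hw
  · simp
  · have hw' : (0:ℝ) < ‖w‖ := norm_pos_iff.2 hw
    rw [inv_mul_eq_div, div_le_iff₀ hw']
    calc ‖⟪w, v⟫_ℂ‖ ≤ ‖w‖ * ‖v‖ := norm_inner_le_norm _ _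
      _ = ‖v‖ * ‖w‖ := mul_comm _ _

lemma aux_norm_eq_iSup {K : Type*} [NormedAddCommGroup K] [InnerProductSpace ℂ K]
    {D : Set K} (hD : Dense D) [Nonempty D] (v : K) :
    ‖v‖ = ⨆ w : D, ‖(w : K)‖⁻¹ * ‖⟪(w : K), v⟫_ℂ‖ := by
  have bdd : BddAbove (Set.range fun w : D => ‖(w : K)‖⁻¹ * ‖⟪(w : K), v⟫_ℂ‖) := by
    refine ⟨‖v‖, ?_⟩
    rintro _ ⟨w, rfl⟩
    exact aux_norm_le_inner _ _
  refine le_antisymm ?_ (ciSup_le fun w => aux_norm_le_inner _ _)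
  refine le_of_forall_lt fun c hc => ?_
  rw [lt_ciSup_iff bdd]
  rcases lt_or_ge c 0 with hc0 | hc0
  · obtain ⟨w⟩ := ‹Nonempty D›
    exact ⟨w, lt_of_lt_of_le hc0 (by positivity)⟩
  · have hv : 0 < ‖v‖ := lt_of_le_of_lt hc0 hc
    set ε := ‖v‖ * (‖v‖ - c) / (2 * (‖v‖ + c + 1)) with hεdef
    have hεpos : 0 < ε := by
      apply div_pos (mul_pos hv (sub_pos.2 hc)); nlinarith
    have hεkey : ε * (2 * (‖v‖ + c + 1)) = ‖v‖ * (‖v‖ - c) := by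
      rw [hεdef]; exact div_mul_cancel₀ _ (show (0:ℝ) < 2 * (‖v‖ + c + 1) by linarith).ne'
    have hεv : ε < ‖v‖ := by nlinarith
    obtain ⟨w, hwD, hwv⟩ : ∃ w ∈ D, dist v w < ε := Metric.mem_closure_iff.1 (hD v) ε hεpos
    have h1 : ‖w - v‖ < ε := by
      rw [dist_eq_norm] at hwv
      rwa [norm_sub_rev]
    have hinner : ‖v‖ ^ 2 - ε * ‖v‖ ≤ ‖⟪w, v⟫_ℂ‖ := by
      have e1 : ⟪w, v⟫_ℂ = ⟪v, v⟫_ℂ + ⟪w - v, v⟫_ℂ := by rw [inner_sub_left]; ring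
      have e2 : ‖⟪v, v⟫_ℂ‖ = ‖v‖ * ‖v‖ := by
        rw [inner_self_eq_norm_sq_to_K (𝕜 := ℂ)]
        rw [norm_pow]
        simp [abs_of_nonneg (norm_nonneg v), sq]
      have e3 : ‖⟪w - v, v⟫_ℂ‖ ≤ ε * ‖v‖ := by
        calc ‖⟪w - v, v⟫_ℂ‖ ≤ ‖w - v‖ * ‖v‖ := norm_inner_le_norm _ _
          _ ≤ ε * ‖v‖ := by gcongr
      calc ‖v‖ ^ 2 - ε * ‖v‖ ≤ ‖⟪v, v⟫_ℂ‖ - ‖⟪w - v, v⟫_ℂ‖ := by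
            rw [e2]; nlinarith
        _ ≤ ‖⟪v, v⟫_ℂ + ⟪w - v, v⟫_ℂ‖ := by
            have := norm_sub_norm_le (⟪v, v⟫_ℂ) (-⟪w - v, v⟫_ℂ)
            simp only [norm_neg, sub_neg_eq_add] at this
            linarith
        _ = ‖⟪w, v⟫_ℂ‖ := by rw [← e1]
    have hip : 0 < ‖v‖ ^ 2 - ε * ‖v‖ := by nlinarith
    have hw0 : 0 < ‖w‖ := by
      rcases eq_or_lt_of_le (norm_nonneg w) with h | h
      · exfalso
        have : w = 0 := by simpa using h.symm
        rw [this] at hinner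
        simp at hinner
        nlinarith
      · exact h
    have hwnorm : ‖w‖ ≤ ‖v‖ + ε := by
      have := norm_le_norm_add_norm_sub' w v
      nlinarith [h1.le]
    refine ⟨⟨w, hwD⟩, ?_⟩
    have key : (‖v‖ ^ 2 - ε * ‖v‖) / (‖v‖ + ε) ≤ ‖(w : K)‖⁻¹ * ‖⟪(w : K), v⟫_ℂ‖ := by
      rw [inv_mul_eq_div]
      exact div_le_div₀ (norm_nonneg _) hinner hw0 hwnorm
    refine lt_of_lt_of_le ?_ key
    rw [lt_div_iff₀ (by nlinarith)]
    nlinarith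
end

lemma aux_pettis {β : Type*} [MeasurableSpace β] {K : Type*} [NormedAddCommGroup K]
    [InnerProductSpace ℂ K] [TopologicalSpace.SeparableSpace K] {f : β → K}
    (h : ∀ w : K, Measurable fun b => ⟪w, f b⟫_ℂ) : StronglyMeasurable f := by
  haveI : Nonempty K := ⟨0⟩
  haveI : SecondCountableTopology K := UniformSpace.secondCountable_of_separable K
  borelize K
  have hnorm : ∀ c : K, Measurable fun b => ‖f b - c‖ := by
    intro c
    obtain ⟨D, hDc, hDd⟩ := TopologicalSpace.exists_countable_dense K
    haveI : Countable D := hDc.to_subtype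
    haveI : Nonempty D := hDd.nonempty.to_subtype
    have heq : (fun b => ‖f b - c‖) =
        fun b => ⨆ w : D, ‖(w : K)‖⁻¹ * ‖⟪(w : K), f b - c⟫_ℂ‖ := by
      funext b; exact aux_norm_eq_iSup hDd _
    rw [heq]
    refine Measurable.iSup fun w => ?_
    have hm : Measurable fun b => ⟪(w : K), f b - c⟫_ℂ := by
      simp_rw [inner_sub_right]
      exact (h w).sub measurable_const
    exact measurable_const.mul hm.norm
  set u : ℕ → K := TopologicalSpace.denseSeq K with hu
  have hur : DenseRange u := TopologicalSpace.denseRange_denseSeq K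
  have hex : ∀ (n : ℕ) (b : β), ∃ k, ‖f b - u k‖ < 1 / (n + 1) := by
    intro n b
    obtain ⟨k, hk⟩ := hur.exists_dist_lt (f b) (by positivity : (0:ℝ) < 1 / (n + 1))
    exact ⟨k, by rwa [dist_eq_norm] at hk⟩
  set N : ℕ → β → ℕ := fun n b => Nat.find (hex n b) with hN
  have hNmeas : ∀ n, Measurable (N n) := by
    intro n
    apply measurable_to_countable'
    intro k
    have : N n ⁻¹' {k} = {b | ‖f b - u k‖ < 1 / (n + 1)} ∩
        ⋂ (j : ℕ) (_ : j < k), {b | ¬ (‖f b - u j‖ < 1 / (n + 1))} := by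
      ext b
      simp only [Set.mem_preimage, Set.mem_singleton_iff, hN, Nat.find_eq_iff, Set.mem_inter_iff,
        Set.mem_setOf_eq, Set.mem_iInter]
    rw [this]
    refine MeasurableSet.inter (measurableSet_lt (hnorm _) measurable_const) ?_
    exact MeasurableSet.iInter fun j => MeasurableSet.iInter fun _ =>
      (measurableSet_lt (hnorm _) measurable_const).compl
  apply stronglyMeasurable_of_tendsto (u := Filter.atTop) (f := fun n b => u (N n b))
  · intro n
    exact (measurable_from_top.comp (hNmeas n)).stronglyMeasurable
  · rw [tendsto_pi_nhds]
    intro b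
    rw [tendsto_iff_dist_tendsto_zero]
    apply squeeze_zero (fun n => dist_nonneg) (fun n => ?_) tendsto_one_div_add_atTop_nhds_zero_nat
    have := Nat.find_spec (hex n b)
    rw [dist_comm, dist_eq_norm]
    exact this.le

lemma aux_apply_meas {β : Type*} [MeasurableSpace β] {H K : Type*}
    [NormedAddCommGroup H] [InnerProductSpace ℂ H]
    [NormedAddCommGroup K] [InnerProductSpace ℂ K]
    (A : β → (H →L[ℂ] K)) (hA : ∀ v : H, StronglyMeasurable fun b => A b v)
    {f : β → H} (hf : StronglyMeasurable f) : StronglyMeasurable fun b => A b (f b) := by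
  apply stronglyMeasurable_of_tendsto Filter.atTop (f := fun n b => A b (hf.approx n b))
  · intro n
    induction hf.approx n using MeasureTheory.SimpleFunc.induction with
    | @const c s hs =>
      have heq : (fun b => A b ((SimpleFunc.piecewise s hs (SimpleFunc.const β c)
          (SimpleFunc.const β 0)) b)) = Set.indicator s fun b => A b c := by
        funext b
        by_cases hb : b ∈ s
        · simp [SimpleFunc.piecewise_apply, hb, Set.indicator_of_mem hb]
        · simp [SimpleFunc.piecewise_apply, hb, Set.indicator_of_notMem hb]
      rw [heq]
      exact (hA c).indicator hs
    | @add f g _ hf hg =>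
      have heq : (fun b => A b ((f + g) b)) =
          fun b => A b (f b) + A b (g b) := by
        funext b; simp [map_add]
      rw [heq]
      exact hf.add hg
  · rw [tendsto_pi_nhds]
    intro b
    exact ((A b).continuous.tendsto _).comp (hf.tendsto_approx b)

lemma aux_construct {G : Type*} [MeasurableSpace G] (μ : Measure G) {H K : Type*}
    [NormedAddCommGroup H] [InnerProductSpace ℂ H] [CompleteSpace H]
    [NormedAddCommGroup K] [InnerProductSpace ℂ K] [CompleteSpace K]
    (A : G → (H →L[ℂ] K)) (hA : ∀ v : H, StronglyMeasurable fun g => A g v)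
    {C : ℝ} (hC : 0 ≤ C) (hAC : ∀ g, ‖A g‖ ≤ C) :
    ∃ T : Lp H 2 μ →L[ℂ] Lp K 2 μ, ‖T‖ ≤ C ∧
      ∀ ζ : Lp H 2 μ, (T ζ : G → K) =ᵐ[μ] fun g => A g ((ζ : G → H) g) := by
  have hsm : ∀ ζ : Lp H 2 μ, AEStronglyMeasurable (fun g => A g ((ζ : G → H) g)) μ := by
    intro ζ
    obtain ⟨f', hf', hff'⟩ := Lp.aestronglyMeasurable ζ
    exact ⟨fun g => A g (f' g), aux_apply_meas A hA hf',
      hff'.mono fun g hg => by simp only [hg]⟩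
  have hbound : ∀ ζ : Lp H 2 μ, ∀ᵐ g ∂μ, ‖A g ((ζ : G → H) g)‖ ≤ C * ‖(ζ : G → H) g‖ := by
    intro ζ
    filter_upwards with g
    calc ‖A g ((ζ : G → H) g)‖ ≤ ‖A g‖ * ‖(ζ : G → H) g‖ := (A g).le_opNorm _
      _ ≤ C * ‖(ζ : G → H) g‖ := by gcongr; exact hAC g
  have hmem : ∀ ζ : Lp H 2 μ, MemLp (fun g => A g ((ζ : G → H) g)) 2 μ := fun ζ =>
    MemLp.of_le_mul (Lp.memLp ζ) (hsm ζ) (hbound ζ)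
  set L0 : Lp H 2 μ → Lp K 2 μ := fun ζ => (hmem ζ).toLp _ with hL0
  have hL0coe : ∀ ζ : Lp H 2 μ, (L0 ζ : G → K) =ᵐ[μ] fun g => A g ((ζ : G → H) g) :=
    fun ζ => MemLp.coeFn_toLp _
  have hLadd : ∀ ζ η : Lp H 2 μ, L0 (ζ + η) = L0 ζ + L0 η := by
    intro ζ η
    apply Lp.ext
    refine (hL0coe _).trans ?_
    refine Filter.EventuallyEq.trans ?_ (Lp.coeFn_add (L0 ζ) (L0 η)).symm
    filter_upwards [Lp.coeFn_add ζ η, hL0coe ζ, hL0coe η] with g h1 h2 h3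
    simp only [h1, Pi.add_apply, map_add, h2, h3]
  have hLsmul : ∀ (c : ℂ) (ζ : Lp H 2 μ), L0 (c • ζ) = c • L0 ζ := by
    intro c ζ
    apply Lp.ext
    refine (hL0coe _).trans ?_
    refine Filter.EventuallyEq.trans ?_ (Lp.coeFn_smul c (L0 ζ)).symm
    filter_upwards [Lp.coeFn_smul c ζ, hL0coe ζ] with g h1 h2
    simp only [h1, Pi.smul_apply, h2, (A g).map_smul]
  have hLnorm : ∀ ζ : Lp H 2 μ, ‖L0 ζ‖ ≤ C * ‖ζ‖ := by
    intro ζ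
    rw [hL0, Lp.norm_toLp, Lp.norm_def]
    have h1 : eLpNorm (fun g => A g ((ζ : G → H) g)) 2 μ ≤
        C.toNNReal • eLpNorm (ζ : G → H) 2 μ := by
      apply eLpNorm_le_nnreal_smul_eLpNorm_of_ae_le_mul
      filter_upwards [hbound ζ] with g hg
      rw [← NNReal.coe_le_coe, NNReal.coe_mul, coe_nnnorm, coe_nnnorm,
        Real.coe_toNNReal C hC]
      exact hg
    have h2 : (C.toNNReal • eLpNorm (ζ : G → H) 2 μ) ≠ ∞ := by
      rw [ENNReal.smul_def, smul_eq_mul]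
      exact ENNReal.mul_ne_top ENNReal.coe_ne_top (Lp.eLpNorm_ne_top ζ)
    calc (eLpNorm (fun g => A g ((ζ : G → H) g)) 2 μ).toReal ≤
        (C.toNNReal • eLpNorm (ζ : G → H) 2 μ).toReal := ENNReal.toReal_mono h2 h1
      _ = C * (eLpNorm (ζ : G → H) 2 μ).toReal := by
        rw [ENNReal.smul_def, smul_eq_mul, ENNReal.toReal_mul, ENNReal.coe_toReal,
          Real.coe_toNNReal C hC]
  set L : Lp H 2 μ →ₗ[ℂ] Lp K 2 μ :=
    { toFun := L0, map_add' := hLadd, map_smul' := hLsmul } with hLdef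
  refine ⟨L.mkContinuous C hLnorm, L.mkContinuous_norm_le hC hLnorm, fun ζ => hL0coe ζ⟩


/-- The regular representation of a TRO action: a continuous WOT-continuous action of a locally
compact group on a TRO `X ⊆ B(H;K)` integrates to a faithful TRO representation on the
Bochner spaces `L²(G;H)` and `L²(G;K)`. -/
theorem integrated_representation_of_TRO_action
    {G : Type*} [Group G] [TopologicalSpace G] [IsTopologicalGroup G]
    [LocallyCompactSpace G] [T2Space G] [MeasurableSpace G] [BorelSpace G]
    (μ : MeasureTheory.Measure G) [μ.IsHaarMeasure]
    {H K : Type*}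
    [NormedAddCommGroup H] [InnerProductSpace ℂ H] [CompleteSpace H]
    [TopologicalSpace.SeparableSpace H]
    [NormedAddCommGroup K] [InnerProductSpace ℂ K] [CompleteSpace K]
    [TopologicalSpace.SeparableSpace K]
    (X : Set (H →L[ℂ] K))
    (hX0 : (0 : H →L[ℂ] K) ∈ X)
    (hXadd : ∀ a ∈ X, ∀ b ∈ X, a + b ∈ X)
    (hXsmul : ∀ (c : ℂ), ∀ a ∈ X, c • a ∈ X)
    (hXclosed : IsClosed X)
    (hXtro : ∀ a ∈ X, ∀ b ∈ X, ∀ c ∈ X, a ∘L ((ContinuousLinearMap.adjoint b) ∘L c) ∈ X)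
    (α : G → (H →L[ℂ] K) → (H →L[ℂ] K))
    (hbij : ∀ g : G, Set.BijOn (α g) X X)
    (hadd : ∀ g : G, ∀ x ∈ X, ∀ y ∈ X, α g (x + y) = α g x + α g y)
    (hsmul : ∀ g : G, ∀ (c : ℂ), ∀ x ∈ X, α g (c • x) = c • α g x)
    (hiso : ∀ g : G, ∀ x ∈ X, ‖α g x‖ = ‖x‖)
    (htro : ∀ g : G, ∀ a ∈ X, ∀ b ∈ X, ∀ c ∈ X,
      α g (a ∘L ((ContinuousLinearMap.adjoint b) ∘L c)) =
        (α g a) ∘L ((ContinuousLinearMap.adjoint (α g b)) ∘L (α g c)))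
    (hhom : ∀ g h : G, ∀ x ∈ X, α (g * h) x = α g (α h x))
    (hone : ∀ x ∈ X, α (1 : G) x = x)
    (hcont : ∀ x ∈ X, Continuous fun g : G => ContinuousLinearMapWOT.ofCLM (α g x)) :
    -- for each x ∈ X there is a unique bounded operator acting pointwise by α_{g⁻¹}(x)
    (∀ x ∈ X, ∃! T : Lp H 2 μ →L[ℂ] Lp K 2 μ,
      ∀ ζ : Lp H 2 μ, ∀ᵐ g ∂μ, (T ζ : G → K) g = α g⁻¹ x ((ζ : G → H) g)) ∧
    -- and any map π assigning to each x ∈ X such an operator is linear, isometric and a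
    -- TRO morphism
    (∀ π : (H →L[ℂ] K) → (Lp H 2 μ →L[ℂ] Lp K 2 μ),
      (∀ x ∈ X, ∀ ζ : Lp H 2 μ, ∀ᵐ g ∂μ, (π x ζ : G → K) g = α g⁻¹ x ((ζ : G → H) g)) →
      (∀ x ∈ X, ∀ y ∈ X, π (x + y) = π x + π y) ∧
      (∀ (c : ℂ), ∀ x ∈ X, π (c • x) = c • π x) ∧
      (∀ x ∈ X, ‖π x‖ = ‖x‖) ∧
      (∀ x ∈ X, ∀ y ∈ X, ∀ z ∈ X,
        π (x ∘L ((ContinuousLinearMap.adjoint y) ∘L z)) =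
          (π x) ∘L ((ContinuousLinearMap.adjoint (π y)) ∘L (π z)))) := by
  have wotcont : ∀ x ∈ X, ∀ (v : H) (w : K), Continuous fun g : G => ⟪w, α g⁻¹ x v⟫_ℂ := by
    intro x hx v w
    have h1 : Continuous fun T : H →WOT[ℂ] K => ⟪w, T v⟫_ℂ := by
      rw [continuous_iff_continuousAt]
      intro A
      exact (ContinuousLinearMapWOT.tendsto_iff_forall_inner_apply_tendsto.mp tendsto_id) v w
    have h2 : Continuous fun g : G => ContinuousLinearMapWOT.ofCLM (α g⁻¹ x) :=
      (hcont x hx).comp continuous_inv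
    exact h1.comp h2
  have hsmeas : ∀ x ∈ X, ∀ v : H, StronglyMeasurable fun g : G => α g⁻¹ x v := by
    intro x hx v
    exact aux_pettis fun w => (wotcont x hx v w).measurable
  have hex : ∀ x ∈ X, ∃ T : Lp H 2 μ →L[ℂ] Lp K 2 μ, ‖T‖ ≤ ‖x‖ ∧
      ∀ ζ : Lp H 2 μ, (T ζ : G → K) =ᵐ[μ] fun g => α g⁻¹ x ((ζ : G → H) g) :=
    fun x hx => aux_construct μ _ (hsmeas x hx) (norm_nonneg x)
      (fun g => (hiso g⁻¹ x hx).le)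
  constructor
  · intro x hx
    obtain ⟨T, _, hT⟩ := hex x hx
    refine ⟨T, hT, fun T' hT' => ?_⟩
    ext ζ
    have h1 : (T' ζ : G → K) =ᵐ[μ] fun g => α g⁻¹ x ((ζ : G → H) g) := hT' ζ
    exact h1.trans (hT ζ).symm
  · intro π hπ'
    have hπ : ∀ x ∈ X, ∀ ζ : Lp H 2 μ,
        ((π x) ζ : G → K) =ᵐ[μ] fun g => α g⁻¹ x ((ζ : G → H) g) :=
      fun x hx ζ => hπ' x hx ζ
    have hle : ∀ x ∈ X, ‖π x‖ ≤ ‖x‖ := by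
      intro x hx
      obtain ⟨T, hTnorm, hT⟩ := hex x hx
      have hTeq : π x = T := by
        ext ζ
        exact (hπ x hx ζ).trans (hT ζ).symm
      rw [hTeq]; exact hTnorm
    refine ⟨?_, ?_, ?_, ?_⟩
    · intro x hx y hy
      ext ζ
      simp only [ContinuousLinearMap.add_apply]
      refine (hπ _ (hXadd x hx y hy) ζ).trans ?_
      refine Filter.EventuallyEq.trans ?_ (Lp.coeFn_add (π x ζ) (π y ζ)).symm
      filter_upwards [hπ x hx ζ, hπ y hy ζ] with g h1 h2
      rw [Pi.add_apply, h1, h2, hadd g⁻¹ x hx y hy]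
      rfl
    · intro c x hx
      ext ζ
      simp only [ContinuousLinearMap.coe_smul', Pi.smul_apply]
      refine (hπ _ (hXsmul c x hx) ζ).trans ?_
      refine Filter.EventuallyEq.trans ?_ (Lp.coeFn_smul c (π x ζ)).symm
      filter_upwards [hπ x hx ζ] with g h1
      rw [Pi.smul_apply, h1, hsmul g⁻¹ c x hx]
      rfl
    · intro x hx
      refine le_antisymm (hle x hx) ?_
      refine le_of_forall_lt fun c hc => ?_
      rcases lt_or_ge c 0 with hcneg | hc0
      · exact lt_of_lt_of_le hcneg (ContinuousLinearMap.opNorm_nonneg _)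
      set c' := (c + ‖x‖) / 2 with hc'def
      have hc'1 : c < c' := by rw [hc'def]; linarith
      have hc'2 : c' < ‖x‖ := by rw [hc'def]; linarith
      have hc'0 : 0 ≤ c' := by rw [hc'def]; linarith
      have hv : ∃ v : H, c' * ‖v‖ < ‖x v‖ := by
        by_contra hcon
        push_neg at hcon
        exact absurd (x.opNorm_le_bound hc'0 fun v => (hcon v).trans (le_refl _)) (not_le.2 hc'2)
      obtain ⟨v, hv⟩ := hv
      have hvpos : 0 < ‖v‖ := by
        rcases eq_or_lt_of_le (norm_nonneg v) with h | h
        · exfalso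
          have hv0 : v = 0 := norm_eq_zero.1 h.symm
          rw [hv0] at hv
          simp at hv
        · exact h
      have hxv : 0 < ‖x v‖ := lt_of_le_of_lt (by positivity) hv
      set δ := (‖x v‖ ^ 2 - c' * ‖v‖ * ‖x v‖) / 2 with hδdef
      have hδpos : 0 < δ := by rw [hδdef]; nlinarith
      have hδkey : c' * ‖v‖ * ‖x v‖ < ‖x v‖ ^ 2 - δ := by rw [hδdef]; nlinarith
      have hφcont : Continuous fun g : G => ⟪x v, α g⁻¹ x v⟫_ℂ := wotcont x hx v (x v)
      set U := {g : G | ‖⟪x v, α g⁻¹ x v⟫_ℂ - ((‖x v‖ : ℂ) ^ 2)‖ < δ} with hUdef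
      have hUopen : IsOpen U := by
        have : Continuous fun g : G => ‖⟪x v, α g⁻¹ x v⟫_ℂ - ((‖x v‖ : ℂ) ^ 2)‖ :=
          (hφcont.sub continuous_const).norm
        exact isOpen_lt this continuous_const
      have h1U : (1 : G) ∈ U := by
        have he : α (1 : G)⁻¹ x = x := by rw [inv_one]; exact hone x hx
        simp only [hUdef, Set.mem_setOf_eq, he]
        rw [inner_self_eq_norm_sq_to_K (𝕜 := ℂ)]
        simpa using hδpos
      obtain ⟨k, hkcomp, h1k, hkU⟩ := exists_compact_subset hUopen h1U
      set S := interior k with hSdef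
      have hSopen : IsOpen S := isOpen_interior
      have hSmeas : MeasurableSet S := hSopen.measurableSet
      have hSpos : 0 < μ S := hSopen.measure_pos μ ⟨1, h1k⟩
      have hSfin : μ S ≠ ∞ :=
        (lt_of_le_of_lt (measure_mono interior_subset) hkcomp.measure_lt_top).ne
      set t := (μ S).toReal with htdef
      have ht : 0 < t := ENNReal.toReal_pos hSpos.ne' hSfin
      set ζ := indicatorConstLp 2 hSmeas hSfin v with hζdef
      set ξ := indicatorConstLp 2 hSmeas hSfin (x v) with hξdef
      have haeint : (fun g => ⟪(ξ : G → K) g, ((π x) ζ : G → K) g⟫_ℂ) =ᵐ[μ]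
          S.indicator fun g => ⟪x v, α g⁻¹ x v⟫_ℂ := by
        filter_upwards [indicatorConstLp_coeFn (p := 2) (hs := hSmeas) (hμs := hSfin) (c := x v),
          indicatorConstLp_coeFn (p := 2) (hs := hSmeas) (hμs := hSfin) (c := v),
          hπ x hx ζ] with g h1 h2 h3
        rw [h1, h3, h2]
        by_cases hg : g ∈ S
        · simp [Set.indicator_of_mem hg]
        · simp [Set.indicator_of_notMem hg]
      have hint : Integrable (S.indicator fun g => ⟪x v, α g⁻¹ x v⟫_ℂ) μ :=
        (L2.integrable_inner (𝕜 := ℂ) ξ ((π x) ζ)).congr haeint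
      have hinner_eq : ⟪ξ, (π x) ζ⟫_ℂ = ∫ g in S, ⟪x v, α g⁻¹ x v⟫_ℂ ∂μ := by
        rw [L2.inner_def, integral_congr_ae haeint, integral_indicator hSmeas]
      have hre_bound : (‖x v‖ ^ 2 - δ) * t ≤ RCLike.re ⟪ξ, (π x) ζ⟫_ℂ := by
        rw [hinner_eq, ← integral_re (by rwa [integrable_indicator_iff hSmeas] at hint)]
        have hconst : ((‖x v‖ ^ 2 - δ) * t) = ∫ _ in S, (‖x v‖ ^ 2 - δ) ∂μ := by
          rw [setIntegral_const, smul_eq_mul, mul_comm]; rfl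
        rw [hconst]
        apply setIntegral_mono_on
        · exact integrableOn_const hSfin
        · have hint' : Integrable (fun g => ⟪x v, α g⁻¹ x v⟫_ℂ) (μ.restrict S) := by
            rwa [integrable_indicator_iff hSmeas] at hint
          exact hint'.re
        · exact hSmeas
        · intro g hg
          have hgU : g ∈ U := hkU (interior_subset hg)
          rw [hUdef, Set.mem_setOf_eq] at hgU
          have h1 : |RCLike.re (⟪x v, α g⁻¹ x v⟫_ℂ - ((‖x v‖ : ℂ) ^ 2))| ≤
              ‖⟪x v, α g⁻¹ x v⟫_ℂ - ((‖x v‖ : ℂ) ^ 2)‖ := RCLike.abs_re_le_norm _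
          rw [map_sub] at h1
          have h2 : RCLike.re ((‖x v‖ : ℂ) ^ 2) = ‖x v‖ ^ 2 := by
            rw [show ((‖x v‖ : ℂ)) ^ 2 = (((‖x v‖ ^ 2 : ℝ)) : ℂ) by push_cast; ring]
            exact RCLike.ofReal_re _
          rw [h2] at h1
          have h3 := (abs_le.1 (h1.trans hgU.le)).1
          linarith
      have hfinal : (‖x v‖ ^ 2 - δ) * t ≤ ‖x v‖ * ‖v‖ * ‖π x‖ * t := by
        calc (‖x v‖ ^ 2 - δ) * t ≤ RCLike.re ⟪ξ, (π x) ζ⟫_ℂ := hre_bound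
          _ ≤ ‖⟪ξ, (π x) ζ⟫_ℂ‖ := RCLike.re_le_norm _
          _ ≤ ‖ξ‖ * ‖(π x) ζ‖ := norm_inner_le_norm _ _
          _ ≤ ‖ξ‖ * (‖π x‖ * ‖ζ‖) := by gcongr; exact (π x).le_opNorm ζ
          _ = ‖x v‖ * ‖v‖ * ‖π x‖ * t := by
            rw [hζdef, hξdef, norm_indicatorConstLp (by norm_num) (by norm_num),
              norm_indicatorConstLp (by norm_num) (by norm_num)]
            have h2 : (2 : ℝ≥0∞).toReal = 2 := by simp
            rw [h2, show μ.real S = t from rfl]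
            have hhalf : t ^ ((1:ℝ)/2) * (t ^ ((1:ℝ)/2)) = t := by
              rw [← Real.rpow_add ht]
              norm_num
            linear_combination (‖x v‖ * ‖π x‖ * ‖v‖) * hhalf
      have hc'lt : c' < ‖π x‖ := by
        have h1 : (‖x v‖ ^ 2 - δ) ≤ ‖x v‖ * ‖v‖ * ‖π x‖ :=
          le_of_mul_le_mul_right (by linarith [hfinal]) ht
        have h2 : c' * (‖v‖ * ‖x v‖) < ‖π x‖ * (‖v‖ * ‖x v‖) := by nlinarith
        exact lt_of_mul_lt_mul_right h2 (by positivity)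
      exact hc'1.trans hc'lt

    · intro x hx y hy z hz
      have hadjmeas : ∀ w : K, StronglyMeasurable fun g : G =>
          ContinuousLinearMap.adjoint (α g⁻¹ y) w := by
        intro w
        apply aux_pettis
        intro v
        have heq : (fun g : G => ⟪v, ContinuousLinearMap.adjoint (α g⁻¹ y) w⟫_ℂ) =
            fun g : G => (starRingEnd ℂ) ⟪w, α g⁻¹ y v⟫_ℂ := by
          funext g
          rw [ContinuousLinearMap.adjoint_inner_right, ← inner_conj_symm]
        rw [heq]
        exact (continuous_star.comp (wotcont y hy v w)).measurable
      have hadjnorm : ∀ g : G, ‖ContinuousLinearMap.adjoint (α g⁻¹ y)‖ ≤ ‖y‖ := by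
        intro g
        exact le_of_eq
          ((ContinuousLinearMap.adjoint.norm_map (α g⁻¹ y)).trans (hiso g⁻¹ y hy))
      obtain ⟨Sop, hSnorm, hSae⟩ := aux_construct μ
        (fun g => ContinuousLinearMap.adjoint (α g⁻¹ y)) hadjmeas (norm_nonneg y) hadjnorm
      have hSop : Sop = ContinuousLinearMap.adjoint (π y) := by
        rw [ContinuousLinearMap.eq_adjoint_iff]
        intro η ζ
        rw [L2.inner_def, L2.inner_def]
        apply integral_congr_ae
        filter_upwards [hSae η, hπ y hy ζ] with g h1 h2
        rw [h1, h2, ContinuousLinearMap.adjoint_inner_left]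
      ext ζ
      refine (hπ _ (hXtro x hx y hy z hz) ζ).trans ?_
      simp only [ContinuousLinearMap.coe_comp', Function.comp_apply]
      rw [← hSop]
      filter_upwards [hπ z hz ζ, hSae ((π z) ζ), hπ x hx (Sop ((π z) ζ))] with g h1 h2 h3
      rw [htro g⁻¹ x hx y hy z hz, h3, h2, h1]
      rfl

end
end

section
/- Let G be a locally compact Hausdorff topological group with a left Haar measure, let H and K be separable complex Hilbert spaces, let X ⊆ B(H;K) be a norm-closed linear subspace closed under the ternary product (a,b,c) ↦ a b* c, and let α : G → (X → X) be a group homomorphism such that each α_g is a surjective linear isometry satisfying α_g(a b* c) = α_g(a)·α_g(b)*·α_g(c), and for each x ∈ X the map g ↦ α_g(x) is WOT-continuous. For x ∈ X let π(x) : L²(G;H) → L²(G;K) be the (unique) bounded operator with (π(x)ζ)(h) = α_{h⁻¹}(x)(ζ(h)) for almost every h, for every ζ ∈ L²(G;H). Let σ_g be the unitary on L²(G;H) given by (σ_g ζ)(h) = ζ(g⁻¹h) and τ_g the unitary on L²(G;K) given by (τ_g η)(h) = η(g⁻¹h) (unitary by left invariance of the Haar measure). Then the action is spatially implemented in this representation: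 π(α_g(x)) = τ_g · π(x) · σ_g* for every g ∈ G and x ∈ X. -/
open Filter Topology MeasureTheory ContinuousLinearMap

noncomputable section

/-- Spatial implementation of an integrated TRO action: in the regular representation `π` on the
Bochner L²-spaces, the action is implemented by the left translation unitaries:
`π(α_g(x)) = τ_g π(x) σ_g*`. -/
theorem integrated_TRO_action_spatially_implemented
    {G : Type*} [Group G] [TopologicalSpace G] [IsTopologicalGroup G]
    [LocallyCompactSpace G] [T2Space G] [MeasurableSpace G] [BorelSpace G]
    (μ : MeasureTheory.Measure G) [μ.IsHaarMeasure]
    {H K : Type*}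
    [NormedAddCommGroup H] [InnerProductSpace ℂ H] [CompleteSpace H]
    [TopologicalSpace.SeparableSpace H]
    [NormedAddCommGroup K] [InnerProductSpace ℂ K] [CompleteSpace K]
    [TopologicalSpace.SeparableSpace K]
    (X : Set (H →L[ℂ] K))
    (hX0 : (0 : H →L[ℂ] K) ∈ X)
    (hXadd : ∀ a ∈ X, ∀ b ∈ X, a + b ∈ X)
    (hXsmul : ∀ (c : ℂ), ∀ a ∈ X, c • a ∈ X)
    (hXclosed : IsClosed X)
    (hXtro : ∀ a ∈ X, ∀ b ∈ X, ∀ c ∈ X, a ∘L ((ContinuousLinearMap.adjoint b) ∘L c) ∈ X)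
    (α : G → (H →L[ℂ] K) → (H →L[ℂ] K))
    (hbij : ∀ g : G, Set.BijOn (α g) X X)
    (hadd : ∀ g : G, ∀ x ∈ X, ∀ y ∈ X, α g (x + y) = α g x + α g y)
    (hsmul : ∀ g : G, ∀ (c : ℂ), ∀ x ∈ X, α g (c • x) = c • α g x)
    (hiso : ∀ g : G, ∀ x ∈ X, ‖α g x‖ = ‖x‖)
    (htro : ∀ g : G, ∀ a ∈ X, ∀ b ∈ X, ∀ c ∈ X,
      α g (a ∘L ((ContinuousLinearMap.adjoint b) ∘L c)) =
        (α g a) ∘L ((ContinuousLinearMap.adjoint (α g b)) ∘L (α g c)))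
    (hhom : ∀ g h : G, ∀ x ∈ X, α (g * h) x = α g (α h x))
    (hone : ∀ x ∈ X, α (1 : G) x = x)
    (hcont : ∀ x ∈ X, Continuous fun g : G => ContinuousLinearMapWOT.ofCLM (α g x))
    -- the integrated representation π
    (π : (H →L[ℂ] K) → (Lp H 2 μ →L[ℂ] Lp K 2 μ))
    (hπ : ∀ x ∈ X, ∀ ζ : Lp H 2 μ, ∀ᵐ h ∂μ, (π x ζ : G → K) h = α h⁻¹ x ((ζ : G → H) h))
    -- the left translation unitaries σ and τ
    (σ : G → (Lp H 2 μ →L[ℂ] Lp H 2 μ))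
    (hσ : ∀ g : G, ∀ ζ : Lp H 2 μ, ∀ᵐ h ∂μ, (σ g ζ : G → H) h = (ζ : G → H) (g⁻¹ * h))
    (τ : G → (Lp K 2 μ →L[ℂ] Lp K 2 μ))
    (hτ : ∀ g : G, ∀ η : Lp K 2 μ, ∀ᵐ h ∂μ, (τ g η : G → K) h = (η : G → K) (g⁻¹ * h)) :
    ∀ g : G, ∀ x ∈ X,
      π (α g x) = (τ g) ∘L ((π x) ∘L (ContinuousLinearMap.adjoint (σ g))) := by
  intro g x hx
  have hxg : α g x ∈ X := (hbij g).mapsTo hx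
  have haeshift : ∀ (g' : G) {p : G → Prop}, (∀ᵐ h ∂μ, p h) → ∀ᵐ h ∂μ, p (g' * h) := by
    intro g' p hp
    exact (measurePreserving_mul_left μ g').quasiMeasurePreserving.ae hp
  -- the adjoint of σ g is σ g⁻¹
  have hadj : ContinuousLinearMap.adjoint (σ g) = σ g⁻¹ := by
    refine ContinuousLinearMap.ext fun η => ?_
    refine ext_inner_right ℂ fun ζ => ?_
    rw [ContinuousLinearMap.adjoint_inner_left]
    rw [MeasureTheory.L2.inner_def, MeasureTheory.L2.inner_def]
    have h1 : ∫ h, (inner ℂ ((η : G → H) h) ((σ g ζ : G → H) h) : ℂ) ∂μ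
        = ∫ h, (inner ℂ ((η : G → H) h) ((ζ : G → H) (g⁻¹ * h)) : ℂ) ∂μ := by
      refine integral_congr_ae ?_
      filter_upwards [hσ g ζ] with h hh
      rw [hh]
    have h2 : ∫ h, (inner ℂ (((σ g⁻¹) η : G → H) h) ((ζ : G → H) h) : ℂ) ∂μ
        = ∫ h, (inner ℂ ((η : G → H) (g * h)) ((ζ : G → H) h) : ℂ) ∂μ := by
      refine integral_congr_ae ?_
      filter_upwards [hσ g⁻¹ η] with h hh
      rw [hh, inv_inv]
    have h3 := MeasureTheory.integral_mul_left_eq_self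
      (μ := μ) (fun h => (inner ℂ ((η : G → H) h) ((ζ : G → H) (g⁻¹ * h)) : ℂ)) g
    simp only [inv_mul_cancel_left] at h3
    rw [h1, h2, ← h3]
  rw [hadj]
  refine ContinuousLinearMap.ext fun ζ => ?_
  refine MeasureTheory.Lp.ext ?_
  simp only [ContinuousLinearMap.comp_apply]
  set ζ' : Lp H 2 μ := σ g⁻¹ ζ with hζ'
  have hζ'ae : ∀ᵐ h ∂μ, (ζ' : G → H) h = (ζ : G → H) (g * h) := by
    filter_upwards [hσ g⁻¹ ζ] with h hh
    rw [hh, inv_inv]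
  have hπζ' : ∀ᵐ h ∂μ, (π x ζ' : G → K) h = α h⁻¹ x ((ζ' : G → H) h) := hπ x hx ζ'
  have hπζ'shift : ∀ᵐ h ∂μ, (π x ζ' : G → K) (g⁻¹ * h)
      = α (g⁻¹ * h)⁻¹ x ((ζ' : G → H) (g⁻¹ * h)) := haeshift g⁻¹ hπζ'
  have hζ'shift : ∀ᵐ h ∂μ, (ζ' : G → H) (g⁻¹ * h) = (ζ : G → H) (g * (g⁻¹ * h)) :=
    haeshift g⁻¹ hζ'ae
  filter_upwards [hπ (α g x) hxg ζ, hτ g (π x ζ'), hπζ'shift, hζ'shift] with h h1 h2 h3 h4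
  rw [h1, h2, h3, h4]
  rw [mul_inv_cancel_left, mul_inv_rev, inv_inv]
  rw [← hhom h⁻¹ g x hx]

end
end
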